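/- Let Ω ⊂ ℝ^d be bounded open, θ ∈ S^{d-1}, μ_θ the directional measure on ∂Ω defined by μ_θ(A) = ∫_Ω χ_A(Φ_θ(x)) dx. Then μ_θ(∂Ω \ ∂_θΩ) = 0, where ∂_θΩ = {z ∈ ∂Ω : ∃ r > 0, ∀ t ∈ ]0,r[, z - tθ ∈ Ω}. -/

import Mathlib

open Set MeasureTheory
open scoped ENNReal

/-- The directional exit length `δ_θ(x) = sup {s ≥ 0 : ∀ t ∈ [0,s[, x + tθ ∈ Ω}`. -/
noncomputable def deltaDir {d : ℕ} (Ω : Set (EuclideanSpace ℝ (Fin d)))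
    (θ x : EuclideanSpace ℝ (Fin d)) : ℝ :=
  sSup {s : ℝ | 0 ≤ s ∧ ∀ t ∈ Set.Ico (0 : ℝ) s, x + t • θ ∈ Ω}

/-- `Φ_θ(x) = x + δ_θ(x) θ`. -/
noncomputable def PhiDir {d : ℕ} (Ω : Set (EuclideanSpace ℝ (Fin d)))
    (θ x : EuclideanSpace ℝ (Fin d)) : EuclideanSpace ℝ (Fin d) :=
  x + deltaDir Ω θ x • θ

/-- `∂_θΩ`, the set of boundary points accessible from `Ω` in direction `θ`. -/
def dirBdry {d : ℕ} (Ω : Set (EuclideanSpace ℝ (Fin d)))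
    (θ : EuclideanSpace ℝ (Fin d)) : Set (EuclideanSpace ℝ (Fin d)) :=
  {z | z ∈ frontier Ω ∧ ∃ r > (0 : ℝ), ∀ t ∈ Set.Ioo (0 : ℝ) r, z - t • θ ∈ Ω}

lemma aux_key {d : ℕ} (Ω : Set (EuclideanSpace ℝ (Fin d)))
    (hΩ : IsOpen Ω) (hb : Bornology.IsBounded Ω)
    (θ : EuclideanSpace ℝ (Fin d)) (hθ : ‖θ‖ = 1)
    {x : EuclideanSpace ℝ (Fin d)} (hx : x ∈ Ω) :
    PhiDir Ω θ x ∉ frontier Ω \ dirBdry Ω θ := by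
  set S : Set ℝ := {s : ℝ | 0 ≤ s ∧ ∀ t ∈ Set.Ico (0 : ℝ) s, x + t • θ ∈ Ω} with hS
  have hne : S.Nonempty := ⟨0, le_refl 0, fun t ht => absurd ht.2 (not_lt.2 ht.1)⟩
  obtain ⟨R, hR⟩ := hb.subset_closedBall 0
  have hbdd : BddAbove S := by
    refine ⟨R + ‖x‖ + 1, fun s hs => ?_⟩
    by_contra h
    push_neg at h
    have hR0 : (0:ℝ) ≤ R := by
      have hx' := hR hx
      simp only [Metric.mem_closedBall, dist_zero_right] at hx'
      exact le_trans (norm_nonneg x) hx'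
    have h1 : R + ‖x‖ + 1 ∈ Set.Ico (0 : ℝ) s := by
      constructor
      · positivity
      · linarith
    have h2 := hs.2 _ h1
    have h3 := hR h2
    simp only [Metric.mem_closedBall, dist_zero_right] at h3
    have h4 : R + ‖x‖ + 1 - ‖x‖ ≤ ‖x + (R + ‖x‖ + 1) • θ‖ := by
      have := norm_sub_norm_le ((R + ‖x‖ + 1) • θ) (-x)
      simp only [norm_neg, sub_neg_eq_add] at this
      rw [norm_smul, hθ, mul_one] at this
      have hnn : (0:ℝ) ≤ R + ‖x‖ + 1 := h1.1
      rw [Real.norm_eq_abs, abs_of_nonneg hnn] at this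
      calc R + ‖x‖ + 1 - ‖x‖ ≤ ‖(R + ‖x‖ + 1) • θ + x‖ := this
        _ = ‖x + (R + ‖x‖ + 1) • θ‖ := by rw [add_comm]
    linarith
  obtain ⟨ε, hε, hball⟩ := Metric.isOpen_iff.1 hΩ x hx
  have hεS : ε ∈ S := by
    refine ⟨le_of_lt hε, fun t ht => hball ?_⟩
    simp only [Metric.mem_ball]
    rw [dist_eq_norm, add_sub_cancel_left, norm_smul, hθ, mul_one,
      Real.norm_eq_abs, abs_of_nonneg ht.1]
    exact ht.2
  have hδpos : 0 < deltaDir Ω θ x := lt_of_lt_of_le hε (le_csSup hbdd hεS)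
  have hmem : ∀ t ∈ Set.Ico (0:ℝ) (deltaDir Ω θ x), x + t • θ ∈ Ω := by
    intro t ht
    obtain ⟨s, hsS, hts⟩ := exists_lt_of_lt_csSup hne ht.2
    exact hsS.2 t ⟨ht.1, hts⟩
  intro ⟨hfr, hnd⟩
  apply hnd
  refine ⟨hfr, deltaDir Ω θ x, hδpos, fun t ht => ?_⟩
  have : PhiDir Ω θ x - t • θ = x + (deltaDir Ω θ x - t) • θ := by
    simp only [PhiDir, sub_smul]
    abel
  rw [this]
  exact hmem _ ⟨by linarith [ht.2], by linarith [ht.1]⟩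

/-- `μ_θ(∂Ω \ ∂_θΩ) = 0`, where `μ_θ(A) = ∫_Ω χ_A(Φ_θ(x)) dx`. -/
theorem stmt9 {d : ℕ} (Ω : Set (EuclideanSpace ℝ (Fin d)))
    (hΩ : IsOpen Ω) (hb : Bornology.IsBounded Ω)
    (θ : EuclideanSpace ℝ (Fin d)) (hθ : ‖θ‖ = 1) :
    ∫⁻ x in Ω, (frontier Ω \ dirBdry Ω θ).indicator
      (fun _ => (1 : ℝ≥0∞)) (PhiDir Ω θ x) ∂volume = 0 := by
  have h : ∀ x ∈ Ω, (frontier Ω \ dirBdry Ω θ).indicator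
      (fun _ => (1 : ℝ≥0∞)) (PhiDir Ω θ x) = 0 := fun x hx =>
    Set.indicator_of_notMem (aux_key Ω hΩ hb θ hθ hx) _
  rw [setLIntegral_congr_fun hΩ.measurableSet h]
  simp
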